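/- Fix γ ∈ (0, 1/4), n ∈ ℕ, set c_n = n^{−(1/4−γ)}, and let d > 2^n. For every map ALG : Z^n → ℝ^d there exists a probability distribution D on Z such that, with F_D(w) = E_{z∼D}[f_B(w;z)], one has E_{S∼D^n}[F_D(ALG(S))] − inf_{w∈ℝ^d} F_D(w) ≥ c_n/4. -/

import Mathlib

/-- Instance space `Z = {0,1}^d × {0, e₁, …, e_d}`: the boolean vector encodes `x` and
`Option (Fin d)` encodes `α` (`none ↦ 0`, `some j ↦ e_j`). -/
abbrev ZB (d : ℕ) := (Fin d → Bool) × Option (Fin d)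

/-- The vector `0` (for `none`) or the standard basis vector `e_j` (for `some j`). -/
noncomputable def stdVec (d : ℕ) (a : Option (Fin d)) : EuclideanSpace ℝ (Fin d) :=
  (WithLp.equiv 2 (Fin d → ℝ)).symm (fun j => if a = some j then 1 else 0)

/-- Coordinatewise (Hadamard) product of a vector with a boolean mask `x ∈ {0,1}^d`. -/
noncomputable def hadamard {d : ℕ} (v : EuclideanSpace ℝ (Fin d)) (x : Fin d → Bool) :
    EuclideanSpace ℝ (Fin d) :=
  (WithLp.equiv 2 (Fin d → ℝ)).symm (fun j => v j * (if x j then 1 else 0))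

/-- The constant `c_n = n^{-(1/4 - γ)}`. -/
noncomputable def cN (n : ℕ) (γ : ℝ) : ℝ := (n : ℝ) ^ (-(1/4 - γ))

/-- The loss `f_B(w; (x,α)) = ½‖(w−α)⊙x‖² − (c/2)‖w−α‖² + max{1, ‖w‖⁴}`. -/
noncomputable def fB (d : ℕ) (c : ℝ) (w : EuclideanSpace ℝ (Fin d)) (z : ZB d) : ℝ :=
  1 / 2 * ‖hadamard (w - stdVec d z.2) z.1‖ ^ 2
    - c / 2 * ‖w - stdVec d z.2‖ ^ 2 + max 1 (‖w‖ ^ 4)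

lemma aux_norm_sq {d : ℕ} (v : EuclideanSpace ℝ (Fin d)) : ‖v‖^2 = ∑ k, (v k)^2 := by
  rw [EuclideanSpace.norm_eq, Real.sq_sqrt (by positivity)]
  simp [sq_abs]

lemma aux_hadamard_apply {d : ℕ} (v : EuclideanSpace ℝ (Fin d)) (x : Fin d → Bool) (k : Fin d) :
    hadamard v x k = v k * (if x k then 1 else 0) := rfl

lemma aux_stdVec_none {d : ℕ} : stdVec d none = 0 := by
  ext k; simp [stdVec]

lemma aux_stdVec_some {d : ℕ} (j k : Fin d) : stdVec d (some j) k = if j = k then 1 else 0 := by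
  simp [stdVec]

lemma aux_prod_if {d : ℕ} (j : Fin d) (a b : ℝ) :
    (∏ k : Fin d, if k = j then a else b) = a * b ^ (d - 1) := by
  rw [← Finset.mul_prod_erase Finset.univ _ (Finset.mem_univ j), if_pos rfl]
  congr 1
  rw [Finset.prod_congr rfl (fun k hk => if_neg (Finset.ne_of_mem_erase hk)),
    Finset.prod_const, Finset.card_erase_of_mem (Finset.mem_univ j), Finset.card_univ,
    Fintype.card_fin]

lemma aux_prod_if2 {d : ℕ} (j k : Fin d) (hjk : j ≠ k) (a b e : ℝ) :
    (∏ m : Fin d, if m = j then a else if m = k then b else e) = a * b * e ^ (d - 2) := by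
  have hk' : k ∈ Finset.univ.erase j := Finset.mem_erase.mpr ⟨hjk.symm, Finset.mem_univ _⟩
  rw [← Finset.mul_prod_erase Finset.univ _ (Finset.mem_univ j), if_pos rfl,
    ← Finset.mul_prod_erase _ _ hk', if_neg hjk.symm, if_pos rfl, ← mul_assoc]
  congr 1
  have : ∀ m ∈ (Finset.univ.erase j).erase k, (if m = j then a else if m = k then b else e) = e := by
    intro m hm
    rw [if_neg (Finset.ne_of_mem_erase (Finset.mem_of_mem_erase hm)),
      if_neg (Finset.ne_of_mem_erase hm)]
  rw [Finset.prod_congr rfl this, Finset.prod_const, Finset.card_erase_of_mem hk',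
    Finset.card_erase_of_mem (Finset.mem_univ j), Finset.card_univ, Fintype.card_fin]
  congr 1

lemma aux_sumx1 {d : ℕ} (j : Fin d) (r : ℝ) :
    (∑ x : Fin d → Bool, if x j = false then r else 0) = r * 2 ^ (d - 1) := by
  have h1 : ∀ x : Fin d → Bool, (if x j = false then r else 0)
      = ∏ k : Fin d, (if k = j then (if x k = false then r else 0) else 1) := by
    intro x
    rw [Finset.prod_ite_eq' Finset.univ j (fun k => if x k = false then r else 0)]
    simp
  calc (∑ x : Fin d → Bool, if x j = false then r else 0)
      = ∑ x : Fin d → Bool, ∏ k, (if k = j then (if x k = false then r else 0) else 1) :=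
        Finset.sum_congr rfl (fun x _ => h1 x)
    _ = ∏ k : Fin d, ∑ b : Bool, (if k = j then (if b = false then r else 0) else 1) :=
        (Fintype.prod_sum (κ := fun _ : Fin d => Bool)
          (fun k b => if k = j then (if b = false then r else 0) else 1)).symm
    _ = ∏ k : Fin d, (if k = j then r else 2) := by
        apply Finset.prod_congr rfl; intro k _
        by_cases hk : k = j <;> simp [hk, Fintype.sum_bool]
    _ = r * 2 ^ (d - 1) := aux_prod_if j r 2

lemma aux_sumx2 {d : ℕ} (j k : Fin d) (hjk : j ≠ k) (r : ℝ) :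
    (∑ x : Fin d → Bool, (if x j = false then r else 0) * (if x k then 1 else 0))
      = r * 2 ^ (d - 2) := by
  have hk' : k ∈ Finset.univ.erase j := Finset.mem_erase.mpr ⟨hjk.symm, Finset.mem_univ _⟩
  have h1 : ∀ x : Fin d → Bool, (if x j = false then r else 0) * (if x k then 1 else 0)
      = ∏ m : Fin d, (if m = j then (if x m = false then r else 0)
          else if m = k then (if x m then 1 else 0) else 1) := by
    intro x
    rw [← Finset.mul_prod_erase Finset.univ _ (Finset.mem_univ j), if_pos rfl,
      ← Finset.mul_prod_erase _ _ hk', if_neg hjk.symm, if_pos rfl]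
    have hrest : ∏ m ∈ (Finset.univ.erase j).erase k, (if m = j then (if x m = false then r else 0)
        else if m = k then (if x m then 1 else 0) else 1) = 1 := by
      apply Finset.prod_eq_one
      intro m hm
      rw [if_neg (Finset.ne_of_mem_erase (Finset.mem_of_mem_erase hm)),
        if_neg (Finset.ne_of_mem_erase hm)]
    rw [hrest, mul_one]
  calc (∑ x : Fin d → Bool, (if x j = false then r else 0) * (if x k then 1 else 0))
      = ∑ x : Fin d → Bool, ∏ m, (if m = j then (if x m = false then r else 0)
          else if m = k then (if x m then 1 else 0) else 1) :=
        Finset.sum_congr rfl (fun x _ => h1 x)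
    _ = ∏ m : Fin d, ∑ b : Bool, (if m = j then (if b = false then r else 0)
          else if m = k then (if b then 1 else 0) else 1) :=
        (Fintype.prod_sum (κ := fun _ : Fin d => Bool)
          (fun m b => if m = j then (if b = false then r else 0)
            else if m = k then (if b then 1 else 0) else 1)).symm
    _ = ∏ m : Fin d, (if m = j then r else if m = k then 1 else 2) := by
        apply Finset.prod_congr rfl; intro m _
        by_cases hm : m = j
        · simp [hm, Fintype.sum_bool]
        · by_cases hm' : m = k <;> simp [hm, hm', Fintype.sum_bool]
    _ = r * 1 * 2 ^ (d - 2) := aux_prod_if2 j k hjk r 1 2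
    _ = r * 2 ^ (d - 2) := by ring


noncomputable def qd {d : ℕ} (r : ℝ) (j : Fin d) (z : ZB d) : ℝ :=
  if z.1 j = false ∧ z.2 = none then r else 0

lemma aux_qsum {d : ℕ} (r : ℝ) (j : Fin d) : ∑ z : ZB d, qd r j z = r * 2 ^ (d - 1) := by
  rw [Fintype.sum_prod_type]
  have h : ∀ x : Fin d → Bool,
      (∑ a : Option (Fin d), qd r j (x, a)) = if x j = false then r else 0 := by
    intro x
    unfold qd
    by_cases hx : x j = false <;> simp [hx]
  rw [Finset.sum_congr rfl (fun x _ => h x)]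
  exact aux_sumx1 j r

lemma aux_fB_none {d : ℕ} (c : ℝ) (w : EuclideanSpace ℝ (Fin d)) (x : Fin d → Bool) :
    fB d c w (x, none)
      = (∑ k, (w k)^2 * (if x k then 1 else 0)) / 2 - c/2 * ‖w‖^2 + max 1 (‖w‖^4) := by
  have h1 : ‖hadamard (w - stdVec d none) x‖^2 = ∑ k, (w k)^2 * (if x k then 1 else 0) := by
    rw [aux_stdVec_none, sub_zero, aux_norm_sq]
    apply Finset.sum_congr rfl
    intro k _
    rw [aux_hadamard_apply]
    by_cases hx : x k <;> simp [hx]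
  unfold fB
  dsimp only
  rw [h1, aux_stdVec_none, sub_zero]
  ring

lemma aux_F {d : ℕ} (c r : ℝ) (hr : r = ((2:ℝ)^(d-1))⁻¹) (hd : 2 ≤ d) (j : Fin d)
    (w : EuclideanSpace ℝ (Fin d)) :
    (∑ z : ZB d, qd r j z * fB d c w z)
      = 1/4 * (‖w‖^2 - (w j)^2) - c/2 * ‖w‖^2 + max 1 (‖w‖^4) := by
  rw [Fintype.sum_prod_type]
  have hinner : ∀ x : Fin d → Bool, (∑ a : Option (Fin d), qd r j (x, a) * fB d c w (x, a))
      = (if x j = false then r else 0) * fB d c w (x, none) := by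
    intro x
    have h0 : ∀ b ∈ Finset.univ, b ≠ (none : Option (Fin d)) →
        qd r j (x, b) * fB d c w (x, b) = 0 := by
      intro b _ hb
      unfold qd
      simp [hb]
    rw [Finset.sum_eq_single_of_mem (none : Option (Fin d)) (Finset.mem_univ _) h0]
    congr 1
    unfold qd
    by_cases hx : x j = false <;> simp [hx]
  rw [Finset.sum_congr rfl (fun x _ => hinner x)]
  have hexp : ∀ x : Fin d → Bool, (if x j = false then r else 0) * fB d c w (x, none)
      = (∑ k, ((w k)^2/2) * ((if x j = false then r else 0) * (if x k then 1 else 0)))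
        + (if x j = false then r else 0) * (max 1 (‖w‖^4) - c/2 * ‖w‖^2) := by
    intro x
    rw [aux_fB_none]
    have e1 : (if x j = false then r else 0)
          * ((∑ k, (w k)^2 * (if x k then 1 else 0)) / 2 - c/2 * ‖w‖^2 + max 1 (‖w‖^4))
        = (∑ k, (if x j = false then r else 0) * ((w k)^2 * (if x k then 1 else 0))) / 2
          + (if x j = false then r else 0) * (max 1 (‖w‖^4) - c/2 * ‖w‖^2) := by
      rw [← Finset.mul_sum]; ring
    rw [e1]
    congr 1
    rw [Finset.sum_div]
    apply Finset.sum_congr rfl; intro k _; ring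
  rw [Finset.sum_congr rfl (fun x _ => hexp x), Finset.sum_add_distrib]
  have e2 : ∑ x : Fin d → Bool, (if x j = false then r else 0) * (max 1 (‖w‖^4) - c/2*‖w‖^2)
      = (max 1 (‖w‖^4) - c/2*‖w‖^2) * (r * 2^(d-1)) := by
    rw [← Finset.sum_mul, aux_sumx1, mul_comm]
  have e3 : ∑ x : Fin d → Bool,
        ∑ k, ((w k)^2/2) * ((if x j = false then r else 0) * (if x k then 1 else 0))
      = ∑ k, ((w k)^2/2) * (if k = j then 0 else r * 2^(d-2)) := by
    rw [Finset.sum_comm]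
    apply Finset.sum_congr rfl; intro k _
    rw [← Finset.mul_sum]
    congr 1
    by_cases hk : k = j
    · rw [if_pos hk]; subst hk
      apply Finset.sum_eq_zero; intro x _
      by_cases hx : x k <;> simp [hx]
    · rw [if_neg hk]
      exact aux_sumx2 j k (fun h => hk h.symm) r
  rw [e2, e3]
  have h20 : ((2:ℝ)^(d-1)) ≠ 0 := by positivity
  have hr1 : r * 2^(d-1) = 1 := by rw [hr]; field_simp
  have hr2 : r * 2^(d-2) = 1/2 := by
    rw [hr]
    have hd12 : (d - 1) = (d-2) + 1 := by omega
    rw [hd12, pow_succ, mul_inv]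
    have h0 : (2:ℝ)^(d-2) ≠ 0 := by positivity
    field_simp
  rw [hr1, hr2]
  have e4 : ∑ k, ((w k)^2/2) * (if k = j then 0 else (1/2:ℝ)) = 1/4 * (‖w‖^2 - (w j)^2) := by
    have h5 : ∀ k : Fin d, ((w k)^2/2) * (if k = j then 0 else (1/2:ℝ))
        = (w k)^2/4 - (if k = j then (w k)^2/4 else 0) := by
      intro k; by_cases hk : k = j <;> simp [hk] <;> ring
    rw [Finset.sum_congr rfl (fun k _ => h5 k), Finset.sum_sub_distrib,
      Finset.sum_ite_eq' Finset.univ j (fun k => (w k)^2/4), if_pos (Finset.mem_univ j),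
      ← Finset.sum_div, ← aux_norm_sq]
    ring
  rw [e4]
  ring
lemma aux_Flb {d : ℕ} (c r : ℝ) (hr : r = ((2:ℝ)^(d-1))⁻¹) (hd : 2 ≤ d) (hc0 : 0 ≤ c)
    (hc4 : c ≤ 1/4) (j : Fin d) (w : EuclideanSpace ℝ (Fin d)) :
    1 - c/2 ≤ ∑ z : ZB d, qd r j z * fB d c w z := by
  rw [aux_F c r hr hd j w]
  have hT0 : (0:ℝ) ≤ ‖w‖^2 := sq_nonneg _
  have hwj : (w j)^2 ≤ ‖w‖^2 := by
    rw [aux_norm_sq]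
    exact Finset.single_le_sum (fun k _ => sq_nonneg (w k)) (Finset.mem_univ j)
  have h4 : ‖w‖^4 = (‖w‖^2)^2 := by ring
  rcases le_total (‖w‖^2) 1 with h1 | h1
  · have hM : (1:ℝ) ≤ max 1 (‖w‖^4) := le_max_left _ _
    nlinarith [mul_nonneg hc0 (sub_nonneg.mpr h1)]
  · have hM : ‖w‖^4 ≤ max 1 (‖w‖^4) := le_max_right _ _
    nlinarith [mul_nonneg (sub_nonneg.mpr h1) (show (0:ℝ) ≤ ‖w‖^2 + 1 - c/2 by nlinarith)]

lemma aux_Key {d : ℕ} (c r : ℝ) (hr : r = ((2:ℝ)^(d-1))⁻¹) (hd : 2 ≤ d) (hc0 : 0 ≤ c)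
    (hc4 : c ≤ 1/4) (w : EuclideanSpace ℝ (Fin d)) (Z : Finset (Fin d)) :
    c/2 * ((Z.card : ℝ) - (if Z.card = 1 then 1 else 0))
      ≤ ∑ j ∈ Z, ((∑ z : ZB d, qd r j z * fB d c w z) - (1 - c/2)) := by
  rcases eq_or_ne Z.card 1 with h1 | h1
  · obtain ⟨j0, rfl⟩ := Finset.card_eq_one.mp h1
    rw [Finset.sum_singleton]
    simp only [Finset.card_singleton, if_pos rfl]
    have := aux_Flb c r hr hd hc0 hc4 j0 w
    norm_num
    linarith
  · rw [if_neg h1]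
    rcases Nat.eq_zero_or_pos Z.card with h0 | hpos
    · obtain rfl := Finset.card_eq_zero.mp h0
      simp
    · have h2 : 2 ≤ Z.card := by omega
      have hterm : ∀ j ∈ Z, ((∑ z : ZB d, qd r j z * fB d c w z) - (1 - c/2))
          = (1/4*‖w‖^2 - c/2*‖w‖^2 + max 1 (‖w‖^4) - 1 + c/2) - (w j)^2/4 :=
        fun j _ => by rw [aux_F c r hr hd j w]; ring
      rw [Finset.sum_congr rfl hterm, Finset.sum_sub_distrib, Finset.sum_const, nsmul_eq_mul]
      have hP0 : (0:ℝ) ≤ ∑ j ∈ Z, (w j)^2/4 := Finset.sum_nonneg (fun j _ => by positivity)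
      have hPle : ∑ j ∈ Z, (w j)^2/4 ≤ ‖w‖^2/4 := by
        have hss : ∑ j ∈ Z, (w j)^2 ≤ ∑ j, (w j)^2 :=
          Finset.sum_le_sum_of_subset_of_nonneg (Finset.subset_univ Z) (fun k _ _ => sq_nonneg _)
        rw [aux_norm_sq, ← Finset.sum_div]
        linarith
      have hM1 : (1:ℝ) ≤ max 1 (‖w‖^4) := le_max_left _ _
      have hT0 : (0:ℝ) ≤ ‖w‖^2 := sq_nonneg _
      have hz2 : (2:ℝ) ≤ (Z.card : ℝ) := by exact_mod_cast h2
      nlinarith [mul_nonneg hT0 (show (0:ℝ) ≤ (Z.card:ℝ)*(1/4 - c/2) - 1/4 by nlinarith),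
        mul_nonneg (show (0:ℝ) ≤ (Z.card:ℝ) by linarith) (sub_nonneg.mpr hM1)]

lemma aux_prodq {d n : ℕ} (r : ℝ) (j : Fin d) (S : Fin n → ZB d) :
    (∏ i, qd r j (S i)) = if (∀ i, (S i).1 j = false ∧ (S i).2 = none) then r^n else 0 := by
  by_cases h : ∀ i, (S i).1 j = false ∧ (S i).2 = none
  · rw [if_pos h, Finset.prod_congr rfl (fun i _ => by unfold qd; rw [if_pos (h i)]),
      Finset.prod_const, Finset.card_univ, Fintype.card_fin]
  · rw [if_neg h]
    obtain ⟨i, hi⟩ := not_forall.mp h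
    exact Finset.prod_eq_zero (Finset.mem_univ i) (by unfold qd; rw [if_neg hi])

lemma aux_bern (m : ℝ) (k : ℕ) (hm : 2 ≤ m) (hk : m ≤ (k:ℝ)) :
    2 * (m - 1)^k ≤ m^k := by
  have hm0 : (0:ℝ) < m := by linarith
  have h1 : (2:ℝ) ≤ (1 + 1/m)^k := by
    have hb := one_add_mul_le_pow (a := 1/m) (le_trans (by norm_num : (-2:ℝ) ≤ 0) (by positivity)) k
    have h2 : (2:ℝ) ≤ 1 + (k:ℝ) * (1/m) := by
      have : (1:ℝ) ≤ (k:ℝ)/m := (one_le_div hm0).mpr hk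
      rw [mul_one_div]; linarith
    linarith
  have h3 : (m - 1) * (1 + 1/m) ≤ m := by
    have he : (m-1)*(1+1/m) = m - 1/m := by field_simp; ring
    have hp : 0 < 1/m := by positivity
    rw [he]; linarith
  have h4 : (0:ℝ) ≤ m - 1 := by linarith
  calc 2 * (m-1)^k ≤ (1+1/m)^k * (m-1)^k := mul_le_mul_of_nonneg_right h1 (pow_nonneg h4 k)
    _ = ((m-1)*(1+1/m))^k := by rw [← mul_pow]; ring_nf
    _ ≤ m^k := pow_le_pow_left₀ (mul_nonneg h4 (by positivity)) h3 k

lemma aux_count {d n : ℕ} (j : Fin d) :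
    Fintype.card {S : Fin n → ZB d // (∀ i, (S i).2 = none) ∧
      Finset.univ.filter (fun k => ∀ i, (S i).1 k = false) = {j}} ≤ (2^n - 1)^(d-1) := by
  classical
  have hcard2 : Fintype.card {y : Fin n → Bool // y ≠ fun _ => false} = 2^n - 1 := by
    simp [Fintype.card_subtype_compl, Fintype.card_fun]
  have hcard1 : Fintype.card {k : Fin d // k ≠ j} = d - 1 := by
    simp [Fintype.card_subtype_compl]
  let Φ : {S : Fin n → ZB d // (∀ i, (S i).2 = none) ∧
        Finset.univ.filter (fun k => ∀ i, (S i).1 k = false) = {j}}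
      → ({k : Fin d // k ≠ j} → {y : Fin n → Bool // y ≠ fun _ => false}) := fun S k =>
    ⟨fun i => (S.1 i).1 k.1, by
      intro hy
      have hk : k.1 ∈ Finset.univ.filter (fun m => ∀ i, (S.1 i).1 m = false) := by
        rw [Finset.mem_filter]
        exact ⟨Finset.mem_univ _, fun i => congrFun hy i⟩
      rw [S.2.2] at hk
      exact k.2 (Finset.mem_singleton.mp hk)⟩
  have hΦ : Function.Injective Φ := by
    intro S S' h
    apply Subtype.ext
    funext i
    have hj1 : ∀ i, (S.1 i).1 j = false := by
      have hmem : j ∈ Finset.univ.filter (fun m => ∀ i, (S.1 i).1 m = false) := by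
        rw [S.2.2]; exact Finset.mem_singleton_self j
      exact (Finset.mem_filter.mp hmem).2
    have hj1' : ∀ i, (S'.1 i).1 j = false := by
      have hmem : j ∈ Finset.univ.filter (fun m => ∀ i, (S'.1 i).1 m = false) := by
        rw [S'.2.2]; exact Finset.mem_singleton_self j
      exact (Finset.mem_filter.mp hmem).2
    apply Prod.ext
    · funext k
      by_cases hk : k = j
      · subst hk; rw [hj1 i, hj1' i]
      · exact congrFun (congrArg Subtype.val (congrFun h ⟨k, hk⟩)) i
    · rw [S.2.1 i, S'.2.1 i]
  calc Fintype.card _ ≤ Fintype.card ({k : Fin d // k ≠ j} → {y : Fin n → Bool // y ≠ fun _ => false}) :=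
        Fintype.card_le_of_injective Φ hΦ
    _ = (2^n - 1)^(d-1) := by rw [Fintype.card_fun, hcard2, hcard1]
def ZsD {d n : ℕ} (S : Fin n → ZB d) : Finset (Fin d) :=
  Finset.univ.filter (fun k => ∀ i, (S i).1 k = false)

lemma aux_count' {d n : ℕ} (j : Fin d) :
    Fintype.card {S : Fin n → ZB d // (∀ i, (S i).2 = none) ∧ ZsD S = {j}}
      ≤ (2^n - 1)^(d-1) := aux_count j

theorem statement13 (γ : ℝ) (hγ : γ ∈ Set.Ioo (0 : ℝ) (1/4)) (n d : ℕ)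
    (hc : cN n γ ≤ 1/4) (hd : 2 ^ n < d)
    (ALG : (Fin n → ZB d) → EuclideanSpace ℝ (Fin d)) :
    ∃ q : ZB d → ℝ, (∀ z, 0 ≤ q z) ∧ (∑ z : ZB d, q z) = 1 ∧
      cN n γ / 4 ≤
        (∑ S : Fin n → ZB d, (∏ i, q (S i)) *
            (∑ z : ZB d, q z * fB d (cN n γ) (ALG S) z))
          - ⨅ w, ∑ z : ZB d, q z * fB d (cN n γ) w z := by
  classical
  have hc0 : 0 ≤ cN n γ := Real.rpow_nonneg (Nat.cast_nonneg n) _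
  have h2n : 1 ≤ 2 ^ n := Nat.one_le_two_pow
  have hd2 : 2 ≤ d := by omega
  set c : ℝ := cN n γ with hcdef
  set r : ℝ := ((2:ℝ)^(d-1))⁻¹ with hrdef
  have hr : r = ((2:ℝ)^(d-1))⁻¹ := hrdef
  have hr0 : 0 ≤ r := by rw [hr]; positivity
  have hrn0 : 0 ≤ r^n := pow_nonneg hr0 n
  have hq1 : ∀ j : Fin d, ∑ z : ZB d, qd r j z = 1 := by
    intro j
    rw [aux_qsum, hr]
    have : ((2:ℝ)^(d-1)) ≠ 0 := by positivity
    field_simp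
  set G : Fin d → ℝ := fun j => ∑ S : Fin n → ZB d,
      (∏ i, qd r j (S i)) * ((∑ z : ZB d, qd r j z * fB d c (ALG S) z) - (1 - c/2)) with hG
  set Y : (Fin n → ZB d) → ℝ :=
      fun S => if (∀ i, (S i).2 = none) ∧ (ZsD S).card = 1 then r^n else 0 with hY
  -- per-S bound
  have hperS : ∀ S : Fin n → ZB d,
      c/2 * ((∑ j, ∏ i, qd r j (S i)) - Y S)
        ≤ ∑ j, (∏ i, qd r j (S i)) *
            ((∑ z : ZB d, qd r j z * fB d c (ALG S) z) - (1 - c/2)) := by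
    intro S
    by_cases hA : ∀ i, (S i).2 = none
    · have hPj : ∀ j : Fin d, (∏ i, qd r j (S i)) = if j ∈ ZsD S then r^n else 0 := by
        intro j
        rw [aux_prodq]
        refine if_congr ?_ rfl rfl
        simp only [ZsD, Finset.mem_filter, Finset.mem_univ, true_and]
        exact ⟨fun h i => (h i).1, fun h i => ⟨h i, hA i⟩⟩
      have hsum1 : ∑ j, (∏ i, qd r j (S i)) *
            ((∑ z : ZB d, qd r j z * fB d c (ALG S) z) - (1 - c/2))
          = r^n * ∑ j ∈ ZsD S,
              ((∑ z : ZB d, qd r j z * fB d c (ALG S) z) - (1 - c/2)) := by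
        rw [Finset.mul_sum, ← Finset.univ_inter (ZsD S), ← Finset.sum_ite_mem]
        apply Finset.sum_congr rfl
        intro j _
        rw [hPj j]
        by_cases hj : j ∈ ZsD S <;> simp [hj]
      have hsum2 : ∑ j, (∏ i, qd r j (S i)) = r^n * ((ZsD S).card : ℝ) := by
        rw [Finset.sum_congr rfl (fun j _ => hPj j), Finset.sum_ite_mem, Finset.univ_inter,
          Finset.sum_const, nsmul_eq_mul]
        ring
      have hYS : Y S = if (ZsD S).card = 1 then r^n else 0 := by
        simp only [hY, hA, true_and]
        simp
      rw [hsum1, hsum2, hYS]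
      have hkey := aux_Key c r hr hd2 hc0 hc (ALG S) (ZsD S)
      have hmul := mul_le_mul_of_nonneg_left hkey hrn0
      calc c/2 * (r^n * ((ZsD S).card : ℝ) - if (ZsD S).card = 1 then r^n else 0)
          = r^n * (c/2 * (((ZsD S).card : ℝ) - if (ZsD S).card = 1 then 1 else 0)) := by
            by_cases h1 : (ZsD S).card = 1 <;> simp only [h1, if_true, if_false] <;> ring
        _ ≤ r^n * ∑ j ∈ ZsD S,
              ((∑ z : ZB d, qd r j z * fB d c (ALG S) z) - (1 - c/2)) := hmul
    · have hPj : ∀ j : Fin d, (∏ i, qd r j (S i)) = 0 := by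
        intro j
        rw [aux_prodq, if_neg]
        intro hcon; exact hA (fun i => (hcon i).2)
      have hYS : Y S = 0 := by
        simp only [hY]
        rw [if_neg]
        intro hcon; exact hA hcon.1
      simp only [hPj, hYS]
      simp
  -- normalization over samples
  have hSnorm : ∀ j : Fin d, ∑ S : Fin n → ZB d, (∏ i, qd r j (S i)) = 1 := by
    intro j
    rw [← Fintype.sum_pow (qd r j) n, hq1 j, one_pow]
  -- bound on the total Y mass
  have hYtot : ∑ S : Fin n → ZB d, Y S ≤ (d:ℝ)/2 := by
    have hstep1 : ∀ S : Fin n → ZB d, Y S ≤ r^n * ∑ j : Fin d,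
        (if (∀ i, (S i).2 = none) ∧ ZsD S = {j} then (1:ℝ) else 0) := by
      intro S
      simp only [hY]
      by_cases hcond : (∀ i, (S i).2 = none) ∧ (ZsD S).card = 1
      · rw [if_pos hcond]
        obtain ⟨j0, hj0⟩ := Finset.card_eq_one.mp hcond.2
        have h1 : (if (∀ i, (S i).2 = none) ∧ ZsD S = {j0} then (1:ℝ) else 0) = 1 :=
          if_pos ⟨hcond.1, hj0⟩
        have hle : (1:ℝ) ≤ ∑ j : Fin d,
            (if (∀ i, (S i).2 = none) ∧ ZsD S = {j} then (1:ℝ) else 0) := by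
          have hs := Finset.single_le_sum
            (f := fun j : Fin d => if (∀ i, (S i).2 = none) ∧ ZsD S = {j} then (1:ℝ) else 0)
            (fun j _ => by split <;> norm_num) (Finset.mem_univ j0)
          rw [h1] at hs
          exact hs
        calc r^n = r^n * 1 := (mul_one _).symm
          _ ≤ r^n * ∑ j : Fin d,
              (if (∀ i, (S i).2 = none) ∧ ZsD S = {j} then (1:ℝ) else 0) :=
            mul_le_mul_of_nonneg_left hle hrn0
      · rw [if_neg hcond]
        exact mul_nonneg hrn0 (Finset.sum_nonneg (fun j _ => by split <;> norm_num))
    have hstep2 : ∀ j : Fin d, (∑ S : Fin n → ZB d,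
          (if (∀ i, (S i).2 = none) ∧ ZsD S = {j} then (1:ℝ) else 0))
        ≤ (((2^n - 1)^(d-1) : ℕ) : ℝ) := by
      intro j
      rw [Finset.sum_boole]
      have hcard : (Finset.univ.filter
            (fun S : Fin n → ZB d => (∀ i, (S i).2 = none) ∧ ZsD S = {j})).card
          ≤ (2^n - 1)^(d-1) := by
        rw [← Fintype.card_subtype]
        exact aux_count' j
      exact_mod_cast hcard
    calc ∑ S : Fin n → ZB d, Y S
        ≤ ∑ S : Fin n → ZB d, r^n * ∑ j : Fin d,
            (if (∀ i, (S i).2 = none) ∧ ZsD S = {j} then (1:ℝ) else 0) :=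
          Finset.sum_le_sum (fun S _ => hstep1 S)
      _ = r^n * ∑ j : Fin d, ∑ S : Fin n → ZB d,
            (if (∀ i, (S i).2 = none) ∧ ZsD S = {j} then (1:ℝ) else 0) := by
          rw [← Finset.mul_sum, Finset.sum_comm]
      _ ≤ r^n * ∑ _j : Fin d, (((2^n - 1)^(d-1) : ℕ) : ℝ) := by
          apply mul_le_mul_of_nonneg_left _ hrn0
          exact Finset.sum_le_sum (fun j _ => hstep2 j)
      _ = r^n * ((d:ℝ) * (((2^n - 1)^(d-1) : ℕ) : ℝ)) := by
          rw [Finset.sum_const, Finset.card_univ, Fintype.card_fin, nsmul_eq_mul]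
      _ ≤ (d:ℝ)/2 := by
          rcases Nat.eq_zero_or_pos n with hn0 | hn1
          · subst hn0
            have hz : ((2:ℕ)^0 - 1)^(d-1) = 0 := by
              have h00 : (2:ℕ)^0 - 1 = 0 := by norm_num
              rw [h00]
              exact zero_pow (by omega)
            rw [hz]
            norm_num
            positivity
          · set m : ℝ := (2:ℝ)^n with hm
            have hm2 : 2 ≤ m := by
              rw [hm]
              calc (2:ℝ) = 2^1 := (pow_one 2).symm
                _ ≤ 2^n := by
                  apply pow_le_pow_right₀ (by norm_num) hn1
            have hkm : m ≤ ((d-1 : ℕ):ℝ) := by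
              have : (2:ℕ)^n ≤ d - 1 := by omega
              have h2 : ((2^n : ℕ):ℝ) ≤ ((d-1:ℕ):ℝ) := Nat.cast_le.mpr this
              rw [hm]
              push_cast at h2 ⊢
              linarith
            have hb := aux_bern m (d-1) hm2 hkm
            have hX : (((2^n - 1)^(d-1) : ℕ) : ℝ) = (m - 1)^(d-1) := by
              rw [hm]
              push_cast [Nat.cast_sub h2n]
              norm_num
            have hrm : r^n * m^(d-1) = 1 := by
              have hcomm : ((2:ℝ)^(d-1))^n = ((2:ℝ)^n)^(d-1) := by
                rw [← pow_mul, ← pow_mul, Nat.mul_comm]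
              rw [hr, inv_pow, hcomm, hm]
              apply inv_mul_cancel₀
              positivity
            rw [hX]
            have hfin := mul_le_mul_of_nonneg_left hb hrn0
            have hd0 : (0:ℝ) ≤ (d:ℝ) := Nat.cast_nonneg d
            nlinarith [hfin, hrm]
  -- main averaged bound
  have hmain : (d:ℝ) * (c/4) ≤ ∑ j : Fin d, G j := by
    have hswap : ∑ j : Fin d, G j = ∑ S : Fin n → ZB d, ∑ j : Fin d,
        (∏ i, qd r j (S i)) *
          ((∑ z : ZB d, qd r j z * fB d c (ALG S) z) - (1 - c/2)) := by
      simp only [hG]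
      exact Finset.sum_comm
    rw [hswap]
    have h1 : ∑ S : Fin n → ZB d, ∑ j : Fin d, (∏ i, qd r j (S i)) = (d:ℝ) := by
      rw [Finset.sum_comm, Finset.sum_congr rfl (fun j _ => hSnorm j)]
      simp
    calc (d:ℝ)*(c/4) = c/2 * ((d:ℝ) - (d:ℝ)/2) := by ring
      _ ≤ c/2 * ((∑ S : Fin n → ZB d, ∑ j : Fin d, (∏ i, qd r j (S i)))
            - ∑ S : Fin n → ZB d, Y S) := by
          rw [h1]
          apply mul_le_mul_of_nonneg_left _ (by linarith : (0:ℝ) ≤ c/2)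
          linarith [hYtot]
      _ = ∑ S : Fin n → ZB d, c/2 * ((∑ j : Fin d, ∏ i, qd r j (S i)) - Y S) := by
          rw [← Finset.sum_sub_distrib, Finset.mul_sum]
      _ ≤ _ := Finset.sum_le_sum (fun S _ => hperS S)
  -- extract a good coordinate j
  have hnonempty : (Finset.univ : Finset (Fin d)).Nonempty :=
    ⟨⟨0, by omega⟩, Finset.mem_univ _⟩
  have hsums : ∑ _j : Fin d, c/4 ≤ ∑ j : Fin d, G j := by
    rw [Finset.sum_const, Finset.card_univ, Fintype.card_fin, nsmul_eq_mul]
    exact hmain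
  obtain ⟨j, _, hj⟩ := Finset.exists_le_of_sum_le hnonempty hsums
  refine ⟨qd r j, fun z => ?_, hq1 j, ?_⟩
  · unfold qd
    split
    · exact hr0
    · exact le_refl 0
  · have hbdd : BddBelow (Set.range fun w : EuclideanSpace ℝ (Fin d) =>
        ∑ z : ZB d, qd r j z * fB d c w z) := by
      refine ⟨1 - c/2, ?_⟩
      rintro y ⟨w, rfl⟩
      exact aux_Flb c r hr hd2 hc0 hc j w
    have hinf : (⨅ w, ∑ z : ZB d, qd r j z * fB d c w z) ≤ 1 - c/2 := by
      refine le_trans (ciInf_le hbdd (stdVec d (some j))) ?_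
      rw [aux_F c r hr hd2 j _]
      have h1 : ‖stdVec d (some j)‖^2 = 1 := by
        rw [aux_norm_sq]
        have hco : ∀ k : Fin d, (stdVec d (some j) k)^2 = if k = j then 1 else 0 := by
          intro k
          by_cases hk : k = j
          · subst hk; rw [aux_stdVec_some, if_pos rfl]; norm_num
          · rw [aux_stdVec_some, if_neg (fun h => hk h.symm), if_neg hk]; norm_num
        rw [Finset.sum_congr rfl (fun k _ => hco k),
          Finset.sum_ite_eq' Finset.univ j (fun _ => (1:ℝ)), if_pos (Finset.mem_univ j)]
      have h2 : stdVec d (some j) j = 1 := by rw [aux_stdVec_some, if_pos rfl]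
      have h4 : ‖stdVec d (some j)‖^4 = 1 := by
        have he : ‖stdVec d (some j)‖^4 = (‖stdVec d (some j)‖^2)^2 := by ring
        rw [he, h1]; norm_num
      rw [h1, h2, h4]
      norm_num
    have hEsplit : ∑ S : Fin n → ZB d, (∏ i, qd r j (S i)) *
          (∑ z : ZB d, qd r j z * fB d c (ALG S) z)
        = G j + (1 - c/2) := by
      have hterm : ∀ S : Fin n → ZB d, (∏ i, qd r j (S i)) *
            (∑ z : ZB d, qd r j z * fB d c (ALG S) z)
          = (∏ i, qd r j (S i)) *
              ((∑ z : ZB d, qd r j z * fB d c (ALG S) z) - (1 - c/2))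
            + (1 - c/2) * (∏ i, qd r j (S i)) := fun S => by ring
      rw [Finset.sum_congr rfl (fun S _ => hterm S), Finset.sum_add_distrib,
        ← Finset.mul_sum, hSnorm j, mul_one]
    rw [hEsplit]
    linarith [hj, hinf]
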